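/- Let $Q$ be a ring satisfying the ascending chain condition on right annihilators and on left annihilators, in which every right ideal has the form $eQ + K$ with $e$ an idempotent and $K$ a nil right ideal. Then $Q$ is semiprimary. -/

import Mathlib

/-- The right annihilator of a subset `X` of a ring. -/
def rAnnSet (R : Type*) [Ring R] (X : Set R) : Set R := {r | ∀ x ∈ X, x * r = 0}

/-- The left annihilator of a subset `X` of a ring. -/
def lAnnSet (R : Type*) [Ring R] (X : Set R) : Set R := {r | ∀ x ∈ X, r * x = 0}

/-- A ring satisfies the ascending chain condition on right annihilators. -/
def ACCRightAnnihilators (R : Type*) [Ring R] : Prop :=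
  ∀ f : ℕ → Set R, (∀ n, ∃ X, f n = rAnnSet R X) → Monotone f →
    ∃ N, ∀ n, N ≤ n → f n = f N

/-- A ring satisfies the ascending chain condition on left annihilators. -/
def ACCLeftAnnihilators (R : Type*) [Ring R] : Prop :=
  ∀ f : ℕ → Set R, (∀ n, ∃ X, f n = lAnnSet R X) → Monotone f →
    ∃ N, ∀ n, N ≤ n → f n = f N

/-- A subset of a ring is a right ideal. -/
def IsRightIdealSet (R : Type*) [Ring R] (I : Set R) : Prop :=
  (0 : R) ∈ I ∧ (∀ a ∈ I, ∀ b ∈ I, a + b ∈ I) ∧ (∀ a ∈ I, -a ∈ I) ∧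
    ∀ a ∈ I, ∀ r : R, a * r ∈ I

/-- A ring is semiprimary if its Jacobson radical `J` is nilpotent and `R/J` is
semisimple Artinian. -/
def IsSemiprimaryRing' (R : Type*) [Ring R] : Prop :=
  (∃ n : ℕ, ∀ x : Fin n → R, (∀ i, x i ∈ (⊥ : TwoSidedIdeal R).jacobson) →
      (List.ofFn x).prod = 0) ∧
    IsSemisimpleRing ((⊥ : TwoSidedIdeal R).jacobson).ringCon.Quotient

/-! ### Auxiliary development -/

namespace SemiprimaryEQNil

variable {Q : Type*} [Ring Q]

/-- The Jacobson radical as a two-sided ideal. -/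
abbrev Jrad (Q : Type*) [Ring Q] : TwoSidedIdeal Q := (⊥ : TwoSidedIdeal Q).jacobson

lemma memJ_iff {x : Q} : x ∈ Jrad Q ↔ ∀ y, ∃ z, z * y * x + z - 1 = 0 := by
  rw [TwoSidedIdeal.mem_jacobson_iff]
  simp [TwoSidedIdeal.mem_bot]

lemma memJ_of_unit {x : Q} (hx : ∀ y, ∃ z, z * (1 + y * x) = 1) : x ∈ Jrad Q := by
  rw [memJ_iff]
  intro y
  obtain ⟨z, hz⟩ := hx y
  refine ⟨z, ?_⟩
  have h2 : z * y * x + z - 1 = z * (1 + y * x) - 1 := by noncomm_ring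
  rw [h2, hz, sub_self]

lemma isNilpotent_swap {a b : Q} (h : IsNilpotent (a * b)) : IsNilpotent (b * a) := by
  obtain ⟨n, hn⟩ := h
  refine ⟨n + 1, ?_⟩
  have key : ∀ m : ℕ, (b * a) ^ (m + 1) = b * (a * b) ^ m * a := by
    intro m
    induction m with
    | zero => simp
    | succ k ih =>
      rw [pow_succ, ih, pow_succ]
      noncomm_ring
  rw [key n, hn]
  simp

lemma memJ_of_nil_right {x : Q} (hx : ∀ r : Q, IsNilpotent (x * r)) : x ∈ Jrad Q := by
  apply memJ_of_unit
  intro y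
  have h1 : IsNilpotent (y * x) := isNilpotent_swap (hx y)
  obtain ⟨u, hu⟩ := h1.isUnit_one_add
  exact ⟨↑u⁻¹, by rw [← hu]; exact u.inv_mul⟩

lemma idem_in_J_eq_zero {e : Q} (he : e ∈ Jrad Q) (hee : e * e = e) : e = 0 := by
  obtain ⟨z, hz⟩ := memJ_iff.mp he (-1 : Q)
  have h1 : z - z * e = 1 := by
    have h3 : z * -1 * e + z - 1 = z - z * e - 1 := by noncomm_ring
    rw [h3] at hz
    exact sub_eq_zero.mp hz
  calc e = (z - z * e) * e := by rw [h1, one_mul]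
  _ = z * e - z * (e * e) := by noncomm_ring
  _ = 0 := by rw [hee]; noncomm_ring

/-- the right ideal generated by `x` -/
def rgen (x : Q) : Set Q := {y | ∃ q : Q, ∃ n : ℤ, y = x * q + n • x}

lemma rgen_isRightIdeal (x : Q) : IsRightIdealSet Q (rgen x) := by
  refine ⟨⟨0, 0, by simp⟩, ?_, ?_, ?_⟩
  · rintro a ⟨q1, n1, rfl⟩ b ⟨q2, n2, rfl⟩
    exact ⟨q1 + q2, n1 + n2, by rw [mul_add, add_smul]; abel⟩
  · rintro a ⟨q1, n1, rfl⟩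
    exact ⟨-q1, -n1, by rw [mul_neg, neg_smul]; abel⟩
  · rintro a ⟨q1, n1, rfl⟩ r
    refine ⟨q1 * r + n1 • r, 0, ?_⟩
    rw [add_mul, mul_add, ← mul_assoc, mul_smul_comm, smul_mul_assoc]
    simp

lemma mem_rgen_self (x : Q) : x ∈ rgen x := ⟨0, 1, by simp⟩

lemma rgen_subset_J {x : Q} (hx : x ∈ Jrad Q) : rgen x ⊆ (Jrad Q : Set Q) := by
  rintro y ⟨q, n, rfl⟩
  exact (Jrad Q).add_mem ((Jrad Q).mul_mem_right _ _ hx) ((Jrad Q).zsmul_mem n hx)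

lemma K_subset_J {K : Set Q} (hK : IsRightIdealSet Q K) (hnil : ∀ x ∈ K, IsNilpotent x) :
    ∀ x ∈ K, x ∈ Jrad Q := fun x hx =>
  memJ_of_nil_right (fun r => hnil _ (hK.2.2.2 x hx r))

/-- Part A : the Jacobson radical is nil. -/
lemma jac_is_nil
    (h : ∀ I : Set Q, IsRightIdealSet Q I →
      ∃ (e : Q) (K : Set Q), e * e = e ∧ IsRightIdealSet Q K ∧
        (∀ x ∈ K, IsNilpotent x) ∧ I = {y | ∃ q : Q, ∃ x ∈ K, y = e * q + x}) :
    ∀ x ∈ Jrad Q, IsNilpotent x := by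
  intro x hx
  obtain ⟨e, K, hee, hK, hKnil, hI⟩ := h (rgen x) (rgen_isRightIdeal x)
  have heI : e ∈ rgen x := by
    rw [hI]; exact ⟨e, 0, hK.1, by rw [hee]; simp⟩
  have heJ : e ∈ Jrad Q := rgen_subset_J hx heI
  have he0 : e = 0 := idem_in_J_eq_zero heJ hee
  have hxI : x ∈ rgen x := mem_rgen_self x
  rw [hI] at hxI
  obtain ⟨q, k, hk, hxk⟩ := hxI
  rw [he0, zero_mul, zero_add] at hxk
  exact hxk ▸ hKnil k hk

/-! ### Part C : nilpotency of the radical -/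

/-- sets of products of `n` elements of the Jacobson radical -/
def Pprod (Q : Type*) [Ring Q] : ℕ → Set Q
  | 0 => {1}
  | n+1 => {z | ∃ j ∈ Jrad Q, ∃ p ∈ Pprod Q n, z = j * p}

/-- `J ∪ {1}` as a predicate -/
def JOne (w : Q) : Prop := w ∈ Jrad Q ∨ w = 1

lemma JOne.one : JOne (1 : Q) := Or.inr rfl

lemma JOne.mul_memJ {u a : Q} (hu : JOne u) (ha : a ∈ Jrad Q) : u * a ∈ Jrad Q := by
  rcases hu with hu | rfl
  · exact (Jrad Q).mul_mem_right _ _ hu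
  · rwa [one_mul]

lemma JOne.memJ_mul {a u : Q} (ha : a ∈ Jrad Q) (hu : JOne u) : a * u ∈ Jrad Q := by
  rcases hu with hu | rfl
  · exact (Jrad Q).mul_mem_right _ _ ha
  · rwa [mul_one]

lemma JOne.mul {u w : Q} (hu : JOne u) (hw : JOne w) : JOne (u * w) := by
  rcases hw with hw | rfl
  · exact Or.inl (hu.mul_memJ hw)
  · rw [mul_one]; exact hu

lemma pp_shiftR : ∀ n : ℕ, ∀ z : Q,
    z ∈ Pprod Q (n+1) ↔ ∃ p ∈ Pprod Q n, ∃ j ∈ Jrad Q, z = p * j := by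
  intro n
  induction n with
  | zero =>
    intro z
    constructor
    · rintro ⟨j, hj, p, hp, rfl⟩
      rcases hp with rfl
      exact ⟨1, rfl, j, hj, by rw [one_mul, mul_one]⟩
    · rintro ⟨p, hp, j, hj, rfl⟩
      rcases hp with rfl
      exact ⟨j, hj, 1, rfl, by rw [one_mul, mul_one]⟩
  | succ k ih =>
    intro z
    constructor
    · rintro ⟨j, hj, p, hp, rfl⟩
      obtain ⟨p', hp', j', hj', rfl⟩ := (ih p).mp hp
      exact ⟨j * p', ⟨j, hj, p', hp', rfl⟩, j', hj', by rw [mul_assoc]⟩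
    · rintro ⟨p, hp, j, hj, rfl⟩
      obtain ⟨j₀, hj₀, p₀, hp₀, rfl⟩ := hp
      refine ⟨j₀, hj₀, p₀ * j, (ih _).mpr ⟨p₀, hp₀, j, hj, rfl⟩, by rw [mul_assoc]⟩

lemma pp_absorbL {a : Q} (ha : a ∈ Jrad Q) {n : ℕ} {t : Q} (ht : t ∈ Pprod Q (n+1)) :
    a * t ∈ Pprod Q (n+1) := by
  obtain ⟨j, hj, p, hp, rfl⟩ := ht
  exact ⟨a * j, (Jrad Q).mul_mem_right _ _ ha, p, hp, by rw [mul_assoc]⟩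

lemma pp_absorbL' {a : Q} (ha : JOne a) {n : ℕ} {t : Q} (ht : t ∈ Pprod Q (n+1)) :
    a * t ∈ Pprod Q (n+1) := by
  rcases ha with ha | rfl
  · exact pp_absorbL ha ht
  · rwa [one_mul]

lemma lAnn_pp_monotone : Monotone (fun i => lAnnSet Q (Pprod Q i)) := by
  apply monotone_nat_of_le_succ
  intro n z hz
  intro t' ht'
  obtain ⟨p, hp, j, hj, rfl⟩ := (pp_shiftR n t').mp ht'
  rw [← mul_assoc, hz p hp, zero_mul]

lemma exists_max_lAnn (haccl : ACCLeftAnnihilators Q) (F : Set (Set Q))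
    (hne : F.Nonempty) (hF : ∀ S ∈ F, ∃ X, S = lAnnSet Q X) :
    ∃ S ∈ F, ∀ S' ∈ F, S ⊆ S' → S' = S := by
  by_contra hcon
  push_neg at hcon
  have hstep : ∀ S : {S // S ∈ F}, ∃ S' : {S // S ∈ F}, S.1 ⊆ S'.1 ∧ S'.1 ≠ S.1 := by
    rintro ⟨S, hS⟩
    obtain ⟨S', hS', hsub, hne'⟩ := hcon S hS
    exact ⟨⟨S', hS'⟩, hsub, hne'⟩
  choose g hg1 hg2 using hstep
  obtain ⟨S₀, hS₀⟩ := hne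
  let f : ℕ → {S // S ∈ F} := fun n => Nat.rec ⟨S₀, hS₀⟩ (fun _ s => g s) n
  have hfs : ∀ n, f (n+1) = g (f n) := fun n => rfl
  have hmono : Monotone (fun n => (f n).1) := by
    apply monotone_nat_of_le_succ
    intro n
    rw [hfs]
    exact hg1 (f n)
  obtain ⟨N, hN⟩ := haccl (fun n => (f n).1) (fun n => hF _ (f n).2) hmono
  have := hN (N+1) (Nat.le_succ N)
  rw [hfs] at this
  exact hg2 (f N) this

lemma pp_pow_memJ {b : Q} (hb : b ∈ Jrad Q) : ∀ k : ℕ, b ^ (k+1) ∈ Jrad Q := by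
  intro k
  induction k with
  | zero => rwa [pow_one]
  | succ n ih => rw [pow_succ]; exact (Jrad Q).mul_mem_right _ _ ih

/-- the "tailed" left annihilator ℓ(x) = l({x t : t ∈ Pprod m}) -/
def tAnn (Q : Type*) [Ring Q] (m : ℕ) (x : Q) : Set Q :=
  lAnnSet Q {u | ∃ t ∈ Pprod Q m, u = x * t}

lemma mem_tAnn_iff {m : ℕ} {x z : Q} :
    z ∈ tAnn Q m x ↔ ∀ t ∈ Pprod Q m, z * (x * t) = 0 := by
  constructor
  · intro hz t ht
    exact hz (x * t) ⟨t, ht, rfl⟩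
  · rintro hz u ⟨t, ht, rfl⟩
    exact hz t ht

lemma tAnn_mono {m : ℕ} (hm : 1 ≤ m) (x y' : Q) (hy' : JOne y') :
    tAnn Q m x ⊆ tAnn Q m (x * y') := by
  obtain ⟨m', rfl⟩ := Nat.exists_eq_succ_of_ne_zero (by omega : m ≠ 0)
  intro z hz
  rw [mem_tAnn_iff] at hz ⊢
  intro t ht
  have h1 : y' * t ∈ Pprod Q (m' + 1) := pp_absorbL' hy' ht
  have := hz _ h1
  simp only [mul_assoc] at this ⊢
  exact this

theorem alpha_step {m : ℕ} (haccl : ACCLeftAnnihilators Q)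
    (hnil : ∀ x ∈ Jrad Q, IsNilpotent x)
    (hm : 1 ≤ m)
    (hstab : ∀ i, m ≤ i → lAnnSet Q (Pprod Q i) = lAnnSet Q (Pprod Q m))
    (c : Q) (hc : ∃ t ∈ Pprod Q m, c * t ≠ 0) :
    ∃ w a, JOne w ∧ a ∈ Jrad Q ∧ (∃ t ∈ Pprod Q m, c * (w * (a * t)) ≠ 0) ∧
      ∀ y, JOne y → ∀ w', JOne w' → ∀ t' ∈ Pprod Q m,
        c * (w' * (a * (y * (a * t')))) = 0 := by
  classical
  -- the set E
  set E : Set Q := {x | x ∈ Jrad Q ∧ ∃ w, JOne w ∧ ∃ t ∈ Pprod Q m, c * (w * (x * t)) ≠ 0}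
    with hE
  have hzeroE : (0 : Q) ∉ E := by
    rintro ⟨-, w, -, t, -, hne⟩
    apply hne
    rw [zero_mul, mul_zero, mul_zero]
  -- E is nonempty
  have hEne : E.Nonempty := by
    have hc2 : ∃ t₂ ∈ Pprod Q (m+2), c * t₂ ≠ 0 := by
      by_contra hcon
      push_neg at hcon
      have : c ∈ lAnnSet Q (Pprod Q (m+2)) := fun t ht => hcon t ht
      rw [hstab (m+2) (by omega)] at this
      obtain ⟨t, ht, hne⟩ := hc
      exact hne (this t ht)
    obtain ⟨t₂, ht₂, hne₂⟩ := hc2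
    obtain ⟨j, hj, p, hp, rfl⟩ := ht₂
    obtain ⟨j', hj', t, ht, rfl⟩ := hp
    refine ⟨j', hj', j, Or.inl hj, t, ht, ?_⟩
    exact hne₂
  -- maximal tailed annihilator
  obtain ⟨S, ⟨a, haE, rfl⟩, hmax'⟩ :=
    exists_max_lAnn haccl ((fun x => tAnn Q m x) '' E) (hEne.image _)
      (by rintro S ⟨x, -, rfl⟩; exact ⟨_, rfl⟩)
  have hmax : ∀ x ∈ E, tAnn Q m a ⊆ tAnn Q m x → tAnn Q m x = tAnn Q m a :=
    fun x hx hsub => hmax' _ ⟨x, hx, rfl⟩ hsub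
  obtain ⟨haJ, w, hw, t, ht, hnz⟩ := haE
  refine ⟨w, a, hw, haJ, ⟨t, ht, hnz⟩, ?_⟩
  -- the main claim
  intro y hy w' hw' t' ht'
  set b := a * y with hb
  have hbJ : b ∈ Jrad Q := JOne.memJ_mul haJ hy
  by_cases hbE : b ∈ E
  · -- hard case
    have hsub : tAnn Q m a ⊆ tAnn Q m b := tAnn_mono hm a y hy
    have hlb : tAnn Q m b = tAnn Q m a := hmax b hbE hsub
    obtain ⟨nn, hbn⟩ := hnil b hbJ
    -- largest power of b in E
    have hp0 : b^(0+1) ∈ E := by rwa [pow_one]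
    obtain ⟨i₀, hbiE, hbsiE⟩ : ∃ i₀ : ℕ, b^(i₀+1) ∈ E ∧ b^(i₀+2) ∉ E := by
      refine ⟨Nat.findGreatest (fun i => b^(i+1) ∈ E) nn,
        Nat.findGreatest_spec (P := fun i => b^(i+1) ∈ E) (Nat.zero_le nn) hp0, ?_⟩
      by_cases hle : Nat.findGreatest (fun i => b^(i+1) ∈ E) nn + 1 ≤ nn
      · exact Nat.findGreatest_is_greatest (P := fun i => b^(i+1) ∈ E)
          (Nat.lt_succ_self _) hle
      · have hnn : nn ≤ Nat.findGreatest (fun i => b^(i+1) ∈ E) nn + 2 := by omega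
        have h0 : b ^ (Nat.findGreatest (fun i => b^(i+1) ∈ E) nn + 2) = 0 :=
          pow_eq_zero_of_le hnn hbn
        rw [h0]
        rintro ⟨-, w₁, -, t₁, -, hne⟩
        apply hne
        rw [zero_mul, mul_zero, mul_zero]
    -- b^(i₀+1) = a * y'' with JOne y''
    have hpowb : ∀ k : ℕ, ∃ y'', JOne y'' ∧ b^(k+1) = a * y'' := by
      intro k
      induction k with
      | zero => exact ⟨y, hy, by rw [pow_one]⟩
      | succ k ih =>
        obtain ⟨y'', hy'', hby⟩ := ih
        refine ⟨y'' * b, Or.inl (JOne.mul_memJ hy'' hbJ), ?_⟩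
        rw [pow_succ, hby, mul_assoc]
    obtain ⟨y'', hy'', hby⟩ := hpowb i₀
    have hsub2 : tAnn Q m a ⊆ tAnn Q m (b^(i₀+1)) := by
      rw [hby]; exact tAnn_mono hm a y'' hy''
    have hlc : tAnn Q m (b^(i₀+1)) = tAnn Q m a := hmax _ hbiE hsub2
    -- closing
    have hnotE : ∀ w₁, JOne w₁ → ∀ t₁ ∈ Pprod Q m, c * (w₁ * (b^(i₀+2) * t₁)) = 0 := by
      intro w₁ hw₁ t₁ ht₁
      by_contra hne
      exact hbsiE ⟨pp_pow_memJ hbJ _, w₁, hw₁, t₁, ht₁, hne⟩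
    have hs : c * (w' * b) ∈ tAnn Q m (b^(i₀+1)) := by
      rw [mem_tAnn_iff]
      intro t₁ ht₁
      have h1 := hnotE w' hw' t₁ ht₁
      have h2 : b^(i₀+2) = b * b^(i₀+1) := by
        rw [← pow_succ']
      rw [h2] at h1
      calc c * (w' * b) * (b ^ (i₀ + 1) * t₁)
          = c * (w' * (b * b ^ (i₀+1) * t₁)) := by
            simp only [mul_assoc]
      _ = 0 := by rw [mul_assoc (b) (b ^ (i₀+1)) t₁] at h1 ⊢; exact h1
    rw [hlc, mem_tAnn_iff] at hs
    have := hs t' ht'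
    calc c * (w' * (a * (y * (a * t'))))
        = c * (w' * b) * (a * t') := by rw [hb]; simp only [mul_assoc]
    _ = 0 := this
  · -- easy case : b ∉ E
    have hnotE : ∀ w₁, JOne w₁ → ∀ t₁ ∈ Pprod Q m, c * (w₁ * (b * t₁)) = 0 := by
      intro w₁ hw₁ t₁ ht₁
      by_contra hne
      exact hbE ⟨hbJ, w₁, hw₁, t₁, ht₁, hne⟩
    obtain ⟨m', rfl⟩ := Nat.exists_eq_succ_of_ne_zero (by omega : m ≠ 0)
    have hat' : a * t' ∈ Pprod Q (m' + 1) := pp_absorbL' (Or.inl haJ) ht'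
    have := hnotE w' hw' _ hat'
    calc c * (w' * (a * (y * (a * t'))))
        = c * (w' * (b * (a * t'))) := by rw [hb]; simp only [mul_assoc]
    _ = 0 := this

theorem jac_pow_zero (haccr : ACCRightAnnihilators Q) (haccl : ACCLeftAnnihilators Q)
    (hnil : ∀ x ∈ Jrad Q, IsNilpotent x) :
    ∃ m, ∀ t ∈ Pprod Q m, t = 0 := by
  classical
  -- stabilize the left annihilator chain
  obtain ⟨m₀, hm₀⟩ := haccl (fun i => lAnnSet Q (Pprod Q i))
    (fun n => ⟨_, rfl⟩) lAnn_pp_monotone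
  set m := m₀ + 1 with hmdef
  have hm : 1 ≤ m := by omega
  have hstab : ∀ i, m ≤ i → lAnnSet Q (Pprod Q i) = lAnnSet Q (Pprod Q m) := by
    intro i hi
    rw [hm₀ i (by omega), hm₀ m (by omega)]
  refine ⟨m, ?_⟩
  by_contra hcon
  push_neg at hcon
  obtain ⟨t₀, ht₀, ht₀ne⟩ := hcon
  -- the invariant
  have inv1 : ∃ t ∈ Pprod Q m, (1 : Q) * t ≠ 0 := ⟨t₀, ht₀, by rwa [one_mul]⟩
  -- choice of step data
  have hstep : ∀ c : Q, (∃ t ∈ Pprod Q m, c * t ≠ 0) →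
      ∃ p : Q × Q × Q, JOne p.1 ∧ p.2.1 ∈ Jrad Q ∧ p.2.2 ∈ Pprod Q m ∧
        c * (p.1 * (p.2.1 * p.2.2)) ≠ 0 ∧
        ∀ y, JOne y → ∀ w', JOne w' → ∀ t' ∈ Pprod Q m,
          c * (w' * (p.2.1 * (y * (p.2.1 * t')))) = 0 := by
    intro c hc
    obtain ⟨w, a, hw, ha, ⟨t, ht, hnz⟩, hP2⟩ := alpha_step haccl hnil hm hstab c hc
    exact ⟨(w, a, t), hw, ha, ht, hnz, hP2⟩
  choose pick hp1 hp2 hp3 hp4 hp5 using hstep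
  -- the sequence of states
  set Inv : Q → Prop := fun c => ∃ t ∈ Pprod Q m, c * t ≠ 0 with hInv
  have hnext : ∀ s : {c : Q // Inv c},
      Inv (s.1 * ((pick s.1 s.2).1 * (pick s.1 s.2).2.1)) := by
    rintro ⟨c, hc⟩
    refine ⟨(pick c hc).2.2, hp3 c hc, ?_⟩
    have := hp4 c hc
    simp only [mul_assoc] at this ⊢
    exact this
  obtain ⟨σ, hσ0, hσs⟩ : ∃ σ : ℕ → {c : Q // Inv c}, σ 0 = ⟨1, inv1⟩ ∧
      ∀ n, σ (n+1) = ⟨(σ n).1 * ((pick (σ n).1 (σ n).2).1 * (pick (σ n).1 (σ n).2).2.1),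
        hnext (σ n)⟩ :=
    ⟨fun n => Nat.rec ⟨1, inv1⟩ (fun _ s => ⟨s.1 * ((pick s.1 s.2).1 * (pick s.1 s.2).2.1),
      hnext s⟩) n, rfl, fun n => rfl⟩
  -- abbreviations
  have hcsucc : ∀ n, (σ (n+1)).1 =
      (σ n).1 * ((pick (σ n).1 (σ n).2).1 * (pick (σ n).1 (σ n).2).2.1) := by
    intro n; rw [hσs n]
  -- products of later steps
  have hureach : ∀ k r, ∃ u, JOne u ∧ (σ (k+1+r)).1 = (σ (k+1)).1 * u := by
    intro k r
    induction r with
    | zero => exact ⟨1, JOne.one, by rw [mul_one]⟩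
    | succ r ih =>
      obtain ⟨u, hu, hcu⟩ := ih
      have harr : k + 1 + (r + 1) = (k + 1 + r) + 1 := by omega
      refine ⟨u * ((pick (σ (k+1+r)).1 (σ (k+1+r)).2).1 *
          (pick (σ (k+1+r)).1 (σ (k+1+r)).2).2.1), ?_, ?_⟩
      · exact JOne.mul hu (Or.inl (JOne.mul_memJ
          (hp1 (σ (k+1+r)).1 (σ (k+1+r)).2) (hp2 (σ (k+1+r)).1 (σ (k+1+r)).2)))
      · rw [harr, hcsucc (k+1+r)]
        conv_rhs => rw [← mul_assoc, ← hcu]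
  -- the ascending chain of right annihilators
  set g : ℕ → Set Q := fun k => rAnnSet Q {x | ∃ r, x = (σ (k+r)).1} with hg
  have hgmono : Monotone g := by
    apply monotone_nat_of_le_succ
    intro k z hz
    rintro x ⟨r, rfl⟩
    have harr : k + 1 + r = k + (1 + r) := by omega
    rw [harr]
    exact hz _ ⟨1 + r, rfl⟩
  obtain ⟨N, hN⟩ := haccr g (fun n => ⟨_, rfl⟩) hgmono
  have hNeq := hN (N+1) (Nat.le_succ N)
  -- the witness
  set w := (pick (σ N).1 (σ N).2).1 with hwdef
  set a := (pick (σ N).1 (σ N).2).2.1 with hadef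
  set t := (pick (σ N).1 (σ N).2).2.2 with htdef
  have hzW : w * (a * t) ∈ g (N+1) := by
    rintro x ⟨r, rfl⟩
    obtain ⟨u, hu, hcu⟩ := hureach N r
    rw [hcu, hcsucc N]
    have hP2 := hp5 (σ N).1 (σ N).2 (u * w) (JOne.mul hu (hp1 (σ N).1 (σ N).2)) w
      (hp1 (σ N).1 (σ N).2) t (hp3 (σ N).1 (σ N).2)
    simp only [mul_assoc] at hP2 ⊢
    exact hP2
  rw [hNeq] at hzW
  have hzc := hzW (σ N).1 ⟨0, by rw [Nat.add_zero]⟩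
  have hnz := hp4 (σ N).1 (σ N).2
  exact hnz hzc

lemma listprod_mem : ∀ (n : ℕ) (x : Fin n → Q), (∀ i, x i ∈ Jrad Q) →
    (List.ofFn x).prod ∈ Pprod Q n := by
  intro n
  induction n with
  | zero =>
    intro x hx
    simp only [List.ofFn_zero, List.prod_nil]
    exact rfl
  | succ n ih =>
    intro x hx
    rw [List.ofFn_succ, List.prod_cons]
    exact ⟨x 0, hx 0, _, ih (fun i => x i.succ) (fun i => hx i.succ), rfl⟩

/-! ### Part B : the quotient is semisimple -/

abbrev Qbar (Q : Type*) [Ring Q] := (Jrad Q).ringCon.Quotient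

def piQ (Q : Type*) [Ring Q] : Q →+* Qbar Q := (Jrad Q).ringCon.mk'

lemma piQ_surjective : Function.Surjective (piQ Q) := by
  intro x
  obtain ⟨y, rfl⟩ := Quotient.exists_rep x
  exact ⟨y, rfl⟩

lemma piQ_eq_zero_iff {x : Q} : piQ Q x = 0 ↔ x ∈ Jrad Q := by
  have h0 : (0 : Qbar Q) = piQ Q 0 := (map_zero _).symm
  rw [h0]
  show (x : Qbar Q) = (0 : Q) ↔ _
  rw [RingCon.eq]
  exact ((Jrad Q).mem_iff x).symm

/-- von Neumann regularity of the quotient -/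
lemma qbar_vnr
    (h : ∀ I : Set Q, IsRightIdealSet Q I →
      ∃ (e : Q) (K : Set Q), e * e = e ∧ IsRightIdealSet Q K ∧
        (∀ x ∈ K, IsNilpotent x) ∧ I = {y | ∃ q : Q, ∃ x ∈ K, y = e * q + x}) :
    ∀ xb : Qbar Q, ∃ ub, xb * ub * xb = xb := by
  intro xb
  obtain ⟨x, rfl⟩ := piQ_surjective xb
  obtain ⟨e, K, hee, hK, hKnil, hI⟩ := h (rgen x) (rgen_isRightIdeal x)
  have hxI := mem_rgen_self x
  rw [hI] at hxI
  obtain ⟨q₀, k₀, hk₀, hx⟩ := hxI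
  have hk₀J : piQ Q k₀ = 0 := piQ_eq_zero_iff.mpr (K_subset_J hK hKnil _ hk₀)
  have hπx : piQ Q x = piQ Q e * piQ Q q₀ := by
    rw [hx, map_add, map_mul, hk₀J, add_zero]
  have heI : e ∈ rgen x := by
    rw [hI]
    exact ⟨e, 0, hK.1, by rw [hee, add_zero]⟩
  obtain ⟨qh, n, he⟩ := heI
  have hπe : piQ Q e = piQ Q x * (piQ Q qh + n • 1) := by
    rw [he, map_add, map_mul, mul_add, map_zsmul, mul_smul_comm, mul_one]
  have hπee : piQ Q e * piQ Q x = piQ Q x := by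
    rw [hπx, ← mul_assoc, ← map_mul, hee]
  refine ⟨piQ Q qh + n • 1, ?_⟩
  rw [← hπe, hπee]

section GeneralRing

variable {S : Type*} [Ring S]

lemma mem_span_single {a x : S} : x ∈ Submodule.span S {a} ↔ ∃ c, x = c * a := by
  rw [Submodule.mem_span_singleton]
  constructor
  · rintro ⟨c, rfl⟩; exact ⟨c, (smul_eq_mul _ _).symm⟩
  · rintro ⟨c, rfl⟩; exact ⟨c, (smul_eq_mul _ _)⟩

lemma exists_bigger_idem (hvnr : ∀ x : S, ∃ u, x * u * x = x)
    (L : Submodule S S) (e : S) (hee : e * e = e) (hle : Submodule.span S {e} ≤ L)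
    (hne : Submodule.span S {e} ≠ L) :
    ∃ e', e' * e' = e' ∧ Submodule.span S {e'} ≤ L ∧ e * e' = e ∧ e' * e = e ∧
      ¬ (Submodule.span S {e'} ≤ Submodule.span S {e}) := by
  obtain ⟨x, hxL, hxe⟩ := SetLike.exists_of_lt (lt_of_le_of_ne hle hne)
  set y := x - x * e with hy
  have hyL : y ∈ L := L.sub_mem hxL (hle (mem_span_single.mpr ⟨x, rfl⟩))
  have hye : y * e = 0 := by
    rw [hy, sub_mul, mul_assoc, hee, sub_self]
  obtain ⟨v, hv⟩ := hvnr y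
  set g := v * y with hg
  have hgg : g * g = g := by
    rw [hg, mul_assoc, ← mul_assoc y v y, hv]
  have hyg : y * g = y := by rw [hg, ← mul_assoc, hv]
  have hge : g * e = 0 := by rw [hg, mul_assoc, hye, mul_zero]
  have hgL : g ∈ L := by
    rw [hg, ← smul_eq_mul]
    exact L.smul_mem v hyL
  set e' := e + g - e * g with he'
  have hee' : e * e' = e := by
    rw [he', mul_sub, mul_add, hee, ← mul_assoc e e g, hee]
    abel
  have he'e : e' * e = e := by
    rw [he', sub_mul, add_mul, hee, hge, add_zero, mul_assoc, hge, mul_zero, sub_zero]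
  have he'g : e' * g = g := by
    rw [he', sub_mul, add_mul, hgg, mul_assoc e g g, hgg]
    abel
  have hge' : g * e' = g := by
    rw [he', mul_sub, mul_add, hge, zero_add, hgg, ← mul_assoc g e g, hge, zero_mul, sub_zero]
  have he'e' : e' * e' = e' := by
    conv_lhs => rw [he']
    rw [sub_mul, add_mul, hee', hge', mul_assoc e g e', hge', he']
  have he'L : e' ∈ L := by
    rw [he']
    refine L.sub_mem (L.add_mem (hle (mem_span_single.mpr ⟨e, hee.symm⟩)) hgL) ?_
    rw [← smul_eq_mul]
    exact L.smul_mem e hgL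
  have hxe' : x ∈ Submodule.span S {e'} := by
    have hx' : x = (x * e + y * g) * e' := by
      rw [add_mul, mul_assoc, hee', mul_assoc, hge', hyg, hy]
      abel
    exact mem_span_single.mpr ⟨x * e + y * g, hx'⟩
  refine ⟨e', he'e', ?_, hee', he'e, ?_⟩
  · rw [Submodule.span_le, Set.singleton_subset_iff]
    exact he'L
  · intro hcon
    exact hxe (hcon hxe')

lemma exists_orthogonal_family (hvnr : ∀ x : S, ∃ u, x * u * x = x)
    (L : Submodule S S) (hL : ∀ f : S, f * f = f → Submodule.span S {f} ≠ L) :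
    ∃ gk : ℕ → S, (∀ n, gk n * gk n = gk n) ∧ (∀ n, gk n ≠ 0) ∧
      (∀ i j, i ≠ j → gk i * gk j = 0) := by
  classical
  have hstep : ∀ s : {e : S // e * e = e ∧ Submodule.span S {e} ≤ L},
      ∃ e' : {e : S // e * e = e ∧ Submodule.span S {e} ≤ L},
        s.1 * e'.1 = s.1 ∧ e'.1 * s.1 = s.1 ∧
        ¬ (Submodule.span S {e'.1} ≤ Submodule.span S {s.1}) := by
    rintro ⟨e, hee, hle⟩
    obtain ⟨e', h1, h2, h3, h4, h5⟩ := exists_bigger_idem hvnr L e hee hle (hL e hee)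
    exact ⟨⟨e', h1, h2⟩, h3, h4, h5⟩
  choose nxt hn1 hn2 hn3 using hstep
  have h0 : ((0:S) * 0 = 0 ∧ Submodule.span S {(0:S)} ≤ L) := by
    constructor
    · rw [mul_zero]
    · rw [Submodule.span_le, Set.singleton_subset_iff]
      exact L.zero_mem
  obtain ⟨σ, hσ0, hσs⟩ : ∃ σ : ℕ → {e : S // e * e = e ∧ Submodule.span S {e} ≤ L},
      σ 0 = ⟨0, h0⟩ ∧ ∀ n, σ (n+1) = nxt (σ n) :=
    ⟨fun n => Nat.rec ⟨0, h0⟩ (fun _ s => nxt s) n, rfl, fun n => rfl⟩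
  have hrel : ∀ n k, (σ n).1 * (σ (n+k)).1 = (σ n).1 ∧ (σ (n+k)).1 * (σ n).1 = (σ n).1 := by
    intro n k
    induction k with
    | zero => exact ⟨(σ n).2.1, (σ n).2.1⟩
    | succ k ih =>
      obtain ⟨ih1, ih2⟩ := ih
      have harr : n + (k+1) = (n+k) + 1 := by omega
      have e1 : (σ (n+k)).1 * (σ (n+k+1)).1 = (σ (n+k)).1 := by
        rw [hσs]; exact hn1 (σ (n+k))
      have e2 : (σ (n+k+1)).1 * (σ (n+k)).1 = (σ (n+k)).1 := by
        rw [hσs]; exact hn2 (σ (n+k))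
      constructor
      · rw [harr, ← ih1, mul_assoc, e1]
      · rw [harr, ← ih2, ← mul_assoc, e2, ih2]
  have hrel' : ∀ i j, i ≤ j → (σ i).1 * (σ j).1 = (σ i).1 ∧ (σ j).1 * (σ i).1 = (σ i).1 := by
    intro i j hij
    obtain ⟨k, rfl⟩ := Nat.exists_eq_add_of_le hij
    exact hrel i k
  refine ⟨fun n => (σ (n+1)).1 - (σ n).1, ?_, ?_, ?_⟩
  · intro n
    obtain ⟨h1, h2⟩ := hrel' n (n+1) (Nat.le_succ n)
    rw [sub_mul, mul_sub, mul_sub, (σ (n+1)).2.1, h1, h2, (σ n).2.1]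
    abel
  · intro n hcon
    have : (σ (n+1)).1 = (σ n).1 := sub_eq_zero.mp hcon
    apply hn3 (σ n)
    rw [← hσs, this]
  · have key : ∀ i j, i < j → ((σ (i+1)).1 - (σ i).1) * ((σ (j+1)).1 - (σ j).1) = 0 ∧
        ((σ (j+1)).1 - (σ j).1) * ((σ (i+1)).1 - (σ i).1) = 0 := by
      intro i j hij
      have hAC := hrel' (i+1) (j+1) (by omega)
      have hAD := hrel' (i+1) j (by omega)
      have hBC := hrel' i (j+1) (by omega)
      have hBD := hrel' i j (by omega)
      constructor
      · rw [sub_mul, mul_sub, mul_sub, hAC.1, hAD.1, hBC.1, hBD.1]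
        abel
      · rw [sub_mul, mul_sub, mul_sub, hAC.2, hAD.2, hBC.2, hBD.2]
        abel
    intro i j hij
    rcases lt_or_gt_of_ne hij with hlt | hgt
    · exact (key i j hlt).1
    · exact (key j i hgt).2

end GeneralRing

/-- lifting a countable orthogonal family of idempotents along the nil radical -/
lemma lift_orthogonal (hnil : ∀ x ∈ Jrad Q, IsNilpotent x)
    (gk : ℕ → Qbar Q) (hidem : ∀ n, gk n * gk n = gk n)
    (hortho : ∀ i j, i ≠ j → gk i * gk j = 0) :
    ∃ F : ℕ → Q, (∀ n, F n * F n = F n) ∧ (∀ n, piQ Q (F n) = gk n) ∧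
      ∀ i j, i ≠ j → F i * F j = 0 := by
  classical
  have hker : ∀ x ∈ RingHom.ker (piQ Q), IsNilpotent x := by
    intro x hx
    exact hnil x (piQ_eq_zero_iff.mp (RingHom.mem_ker.mp hx))
  have hstep : ∀ (n : ℕ) (s : Q), s * s = s → piQ Q s = ∑ k ∈ Finset.range n, gk k →
      ∃ e', e' * e' = e' ∧ piQ Q e' = gk n ∧ e' * s = 0 ∧ s * e' = 0 := by
    intro n s hss hπs
    have h1 : gk n * piQ Q s = 0 := by
      rw [hπs, Finset.mul_sum]
      apply Finset.sum_eq_zero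
      intro k hk
      exact hortho n k (by simp at hk; omega)
    have h2 : piQ Q s * gk n = 0 := by
      rw [hπs, Finset.sum_mul]
      apply Finset.sum_eq_zero
      intro k hk
      exact hortho k n (by simp at hk; omega)
    obtain ⟨e', he1, he2, he3, he4⟩ :=
      exists_isIdempotentElem_mul_eq_zero_of_ker_isNilpotent (piQ Q) hker (gk n)
        (piQ_surjective _) (hidem n) s hss h1 h2
    exact ⟨e', he1, he2, he3, he4⟩
  choose nxt h1 h2 h3 h4 using hstep
  have P0 : ((0:Q) * 0 = 0 ∧ piQ Q 0 = ∑ k ∈ Finset.range 0, gk k) := by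
    constructor
    · rw [mul_zero]
    · simp
  have hstepP : ∀ (n : ℕ) (s : {s : Q // s * s = s ∧ piQ Q s = ∑ k ∈ Finset.range n, gk k}),
      ((s.1 + nxt n s.1 s.2.1 s.2.2) * (s.1 + nxt n s.1 s.2.1 s.2.2) =
        s.1 + nxt n s.1 s.2.1 s.2.2 ∧
        piQ Q (s.1 + nxt n s.1 s.2.1 s.2.2) = ∑ k ∈ Finset.range (n+1), gk k) := by
    intro n s
    set e := nxt n s.1 s.2.1 s.2.2 with he
    have ha := h1 n s.1 s.2.1 s.2.2
    have hb := h3 n s.1 s.2.1 s.2.2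
    have hc := h4 n s.1 s.2.1 s.2.2
    have hd := h2 n s.1 s.2.1 s.2.2
    rw [← he] at ha hb hc hd
    constructor
    · rw [add_mul, mul_add, mul_add, s.2.1, ha, hb, hc]
      abel
    · rw [map_add, s.2.2, hd, Finset.sum_range_succ]
  obtain ⟨σ, hσ0, hσs⟩ : ∃ σ : ∀ n : ℕ,
      {s : Q // s * s = s ∧ piQ Q s = ∑ k ∈ Finset.range n, gk k},
      σ 0 = ⟨0, P0⟩ ∧ ∀ n, (σ (n+1)).1 = (σ n).1 + nxt n (σ n).1 (σ n).2.1 (σ n).2.2 :=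
    ⟨fun n => Nat.rec ⟨0, P0⟩ (fun n s => ⟨s.1 + nxt n s.1 s.2.1 s.2.2, hstepP n s⟩) n,
      rfl, fun n => rfl⟩
  set F : ℕ → Q := fun n => nxt n (σ n).1 (σ n).2.1 (σ n).2.2 with hF
  have hsum : ∀ k n, k < n → F k * (σ n).1 = F k ∧ (σ n).1 * F k = F k := by
    intro k n
    induction n with
    | zero => omega
    | succ n ih =>
      intro hkn
      have hFs : F n * (σ n).1 = 0 := h3 n (σ n).1 (σ n).2.1 (σ n).2.2
      have hsF : (σ n).1 * F n = 0 := h4 n (σ n).1 (σ n).2.1 (σ n).2.2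
      rcases Nat.lt_succ_iff_lt_or_eq.mp hkn with hlt | rfl
      · obtain ⟨ih1, ih2⟩ := ih hlt
        constructor
        · rw [hσs n, mul_add, ih1]
          have : F k * F n = 0 := by
            rw [← ih1, mul_assoc, hsF, mul_zero]
          rw [this, add_zero]
        · rw [hσs n, add_mul, ih2]
          have : F n * F k = 0 := by
            rw [← ih2, ← mul_assoc, hFs, zero_mul]
          rw [this, add_zero]
      · constructor
        · rw [hσs k, mul_add, hFs, h1 k (σ k).1 (σ k).2.1 (σ k).2.2, zero_add]
        · rw [hσs k, add_mul, hsF, h1 k (σ k).1 (σ k).2.1 (σ k).2.2, zero_add]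
  refine ⟨F, fun n => h1 n (σ n).1 (σ n).2.1 (σ n).2.2,
    fun n => h2 n (σ n).1 (σ n).2.1 (σ n).2.2, ?_⟩
  have key : ∀ i j, i < j → F i * F j = 0 ∧ F j * F i = 0 := by
    intro i j hij
    have hFs : F j * (σ j).1 = 0 := h3 j (σ j).1 (σ j).2.1 (σ j).2.2
    have hsF : (σ j).1 * F j = 0 := h4 j (σ j).1 (σ j).2.1 (σ j).2.2
    obtain ⟨hi1, hi2⟩ := hsum i j hij
    constructor
    · rw [← hi1, mul_assoc, hsF, mul_zero]
    · rw [← hi2, ← mul_assoc, hFs, zero_mul]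
  intro i j hij
  rcases lt_or_gt_of_ne hij with h | h
  · exact (key i j h).1
  · exact (key j i h).2

/-- no infinite orthogonal families of nonzero idempotents under ACC -/
lemma no_infinite_orthogonal (haccr : ACCRightAnnihilators Q)
    (F : ℕ → Q) (hne : ∀ n, F n ≠ 0) (hid : ∀ n, F n * F n = F n)
    (hortho : ∀ i j, i ≠ j → F i * F j = 0) : False := by
  set g : ℕ → Set Q := fun k => rAnnSet Q {x | ∃ r, x = F (k + r)} with hg
  have hmono : Monotone g := by
    apply monotone_nat_of_le_succ
    intro k z hz
    rintro x ⟨r, rfl⟩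
    have : k + 1 + r = k + (1 + r) := by omega
    rw [this]
    exact hz _ ⟨1 + r, rfl⟩
  obtain ⟨N, hN⟩ := haccr g (fun n => ⟨_, rfl⟩) hmono
  have hNs := hN (N+1) (Nat.le_succ N)
  have hmem : F N ∈ g (N+1) := by
    rintro x ⟨r, rfl⟩
    exact hortho _ _ (by omega)
  rw [hNs] at hmem
  have := hmem (F N) ⟨0, by rw [Nat.add_zero]⟩
  rw [hid N] at this
  exact hne N this

theorem qbar_semisimple (haccr : ACCRightAnnihilators Q)
    (hnil : ∀ x ∈ Jrad Q, IsNilpotent x)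
    (hvnr : ∀ xb : Qbar Q, ∃ ub, xb * ub * xb = xb) :
    IsSemisimpleRing (Qbar Q) := by
  refine (isSemisimpleModule_iff _ _).mpr ?_
  constructor
  intro L
  have hexists : ∃ f : Qbar Q, f * f = f ∧ Submodule.span (Qbar Q) {f} = L := by
    by_contra hcon
    push_neg at hcon
    obtain ⟨gk, hidem, hne, hortho⟩ := exists_orthogonal_family hvnr L hcon
    obtain ⟨F, hFid, hFπ, hFortho⟩ := lift_orthogonal hnil gk hidem hortho
    refine no_infinite_orthogonal haccr F ?_ hFid hFortho
    intro n hFn0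
    apply hne n
    rw [← hFπ n, hFn0, map_zero]
  obtain ⟨f, hff, hspan⟩ := hexists
  refine ⟨Submodule.span (Qbar Q) {1 - f}, ?_, ?_⟩
  · rw [Submodule.disjoint_def]
    intro x hxL hx2
    rw [← hspan] at hxL
    obtain ⟨c, rfl⟩ := mem_span_single.mp hxL
    obtain ⟨d, hd⟩ := mem_span_single.mp hx2
    have h1 : c * f * f = c * f := by rw [mul_assoc, hff]
    have h2 : c * f * f = 0 := by
      rw [hd, mul_assoc, sub_mul, one_mul, hff, sub_self, mul_zero]
    rw [← h1, h2]
  · rw [codisjoint_iff]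
    rw [Submodule.eq_top_iff']
    intro x
    apply Submodule.mem_sup.mpr
    refine ⟨x * f, ?_, x * (1 - f), ?_, ?_⟩
    · rw [← hspan]
      exact mem_span_single.mpr ⟨x, rfl⟩
    · exact mem_span_single.mpr ⟨x, rfl⟩
    · noncomm_ring

end SemiprimaryEQNil

/-- A ring with ACC on right and left annihilators, in which every right ideal has the
form `eQ + K` with `e` idempotent and `K` a nil right ideal, is semiprimary. -/
theorem semiprimary_of_right_ideals_eQ_plus_nil {Q : Type*} [Ring Q]
    (haccr : ACCRightAnnihilators Q) (haccl : ACCLeftAnnihilators Q)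
    (h : ∀ I : Set Q, IsRightIdealSet Q I →
      ∃ (e : Q) (K : Set Q), e * e = e ∧ IsRightIdealSet Q K ∧
        (∀ x ∈ K, IsNilpotent x) ∧ I = {y | ∃ q : Q, ∃ x ∈ K, y = e * q + x}) :
    IsSemiprimaryRing' Q := by
  have hnil : ∀ x ∈ SemiprimaryEQNil.Jrad Q, IsNilpotent x := SemiprimaryEQNil.jac_is_nil h
  constructor
  · obtain ⟨m, hm⟩ := SemiprimaryEQNil.jac_pow_zero haccr haccl hnil
    exact ⟨m, fun x hx => hm _ (SemiprimaryEQNil.listprod_mem m x hx)⟩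
  · exact SemiprimaryEQNil.qbar_semisimple haccr hnil (SemiprimaryEQNil.qbar_vnr h)
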